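/- For n ≥ 4 let M(n) be the n×n integer matrix with entries M_{i,i+1} = 1 and M_{i+1,i} = −1 for 1 ≤ i ≤ n−2, M_{n−2,n} = 1, M_{n,n−2} = −1, M_{n−1,n} = 2, M_{n,n−1} = −2, and all other entries 0. Then det M(n) = 4 if n is even, and det M(n) = 0 if n is odd. -/

import Mathlib

open Matrix

abbrev Hyp (n : ℕ) (M : Matrix (Fin n) (Fin n) ℤ) : Prop :=
  ∀ i j : Fin n, M i j =
    if (i : ℕ) + 1 = (j : ℕ) then (if (j : ℕ) = n - 1 then 2 else 1)
    else if (j : ℕ) + 1 = (i : ℕ) then (if (i : ℕ) = n - 1 then -2 else -1)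
    else if (i : ℕ) + 2 = (j : ℕ) ∧ (j : ℕ) = n - 1 then 1
    else if (j : ℕ) + 2 = (i : ℕ) ∧ (i : ℕ) = n - 1 then -1
    else 0

lemma odd_case (n : ℕ) (hodd : ¬ Even n) (M : Matrix (Fin n) (Fin n) ℤ)
    (hM : Hyp n M) : M.det = 0 := by
  have hskew : Mᵀ = -M := by
    ext i j
    simp only [transpose_apply, neg_apply, hM]
    split_ifs <;> first | omega | tauto
  have h1 : M.det = (-1 : ℤ)^n * M.det := by
    conv_lhs => rw [← det_transpose, hskew, det_neg]
    simp
  rw [Odd.neg_one_pow (Nat.not_even_iff_odd.mp hodd)] at h1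
  linarith

lemma step (m : ℕ) (hm : 2 ≤ m) (M : Matrix (Fin (m+2)) (Fin (m+2)) ℤ)
    (hM : Hyp (m+2) M) :
    ∃ M' : Matrix (Fin m) (Fin m) ℤ, Hyp m M' ∧ M.det = M'.det := by
  refine ⟨M.submatrix (Fin.succ ∘ Fin.succ) (Fin.succ ∘ Fin.succ), ?_, ?_⟩
  · intro i j
    simp only [submatrix_apply, Function.comp_apply, hM, Fin.val_succ]
    split_ifs <;> first | omega | tauto
  · rw [det_succ_row_zero]
    rw [Finset.sum_eq_single (1 : Fin (m+2))]
    · have h01 : M 0 1 = 1 := by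
        rw [hM]
        simp only [Fin.val_zero, Fin.val_one]
        split_ifs <;> first | omega | tauto
      rw [h01]
      rw [det_succ_column_zero]
      rw [Finset.sum_eq_single (0 : Fin (m+1))]
      · have hN0 : M.submatrix Fin.succ (Fin.succAbove 1) 0 0 = -1 := by
          simp only [submatrix_apply]
          rw [hM]
          simp [Fin.succAbove]
          omega
        rw [hN0]
        rw [submatrix_submatrix]
        have hcols : (Fin.succAbove 1) ∘ Fin.succ = (Fin.succ ∘ Fin.succ : Fin m → Fin (m+2)) := by
          funext j
          simp only [Function.comp_apply]
          rw [Fin.succAbove_of_le_castSucc]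
          simp [Fin.le_def]
        have hrows : (Fin.succ ∘ Fin.succAbove 0) = (Fin.succ ∘ Fin.succ : Fin m → Fin (m+2)) := by
          funext j; simp
        rw [hcols, hrows]
        simp
      · intro i _ hi
        have : M.submatrix Fin.succ (Fin.succAbove 1) i 0 = 0 := by
          simp only [submatrix_apply]
          rw [hM]
          have hiv : (i : ℕ) ≠ 0 := fun h => hi (Fin.ext h)
          simp [Fin.succAbove, Fin.val_succ]
          split_ifs <;> first | omega | tauto
        rw [this]; ring
      · simp
    · intro j _ hj
      have : M 0 j = 0 := by
        rw [hM]
        have hjv : (j : ℕ) ≠ 1 := fun h => hj (Fin.ext (by simpa using h))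
        simp only [Fin.val_zero]
        split_ifs <;> first | omega | tauto
      rw [this]; ring
    · simp

theorem stmt4 (n : ℕ) (hn : 4 ≤ n) (M : Matrix (Fin n) (Fin n) ℤ)
    (hM : ∀ i j : Fin n, M i j =
      if (i : ℕ) + 1 = (j : ℕ) then (if (j : ℕ) = n - 1 then 2 else 1)
      else if (j : ℕ) + 1 = (i : ℕ) then (if (i : ℕ) = n - 1 then -2 else -1)
      else if (i : ℕ) + 2 = (j : ℕ) ∧ (j : ℕ) = n - 1 then 1
      else if (j : ℕ) + 2 = (i : ℕ) ∧ (i : ℕ) = n - 1 then -1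
      else 0) :
    M.det = if Even n then 4 else 0 := by
  induction n using Nat.strong_induction_on with
  | _ n ih =>
    by_cases he : Even n
    · rw [if_pos he]
      rcases Nat.lt_or_ge n 6 with h6 | h6
      · have h4 : n = 4 := by rw [Nat.even_iff] at he; omega
        subst h4
        have hM' : M = !![0,1,0,0; -1,0,1,1; 0,-1,0,2; 0,-1,-2,0] := by
          ext i j
          fin_cases i <;> fin_cases j <;> rw [hM] <;> norm_num
        rw [hM']
        simp [Matrix.det_succ_row_zero, Fin.sum_univ_succ, Fin.succAbove]
      · obtain ⟨m, rfl⟩ : ∃ m, n = m + 2 := ⟨n - 2, by omega⟩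
        obtain ⟨M', hM', hdet⟩ := step m (by omega) M hM
        have hem : Even m := by
          rw [Nat.even_iff] at he ⊢; omega
        rw [hdet, ih m (by omega) (by omega) M' hM', if_pos hem]
    · rw [if_neg he]
      exact odd_case n he M hM
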